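/- For every real number u > 0, f(u) − 2·D(u) = g(u), where f(u) = (1/u)(√(1+u) − 1 − log((1+√(1+u))/2)), D(u) is the derivative at u of the function u ↦ u·f(u), and g(u) = −(1/u)·log((1+√(1+u))/2). -/

import Mathlib

/-- The Biquard–Gauduchon function
`f(u) = (1/u)(√(1+u) − 1 − log((1+√(1+u))/2))`. -/
noncomputable def BGf (u : ℝ) : ℝ :=
  (1 / u) * (Real.sqrt (1 + u) - 1 - Real.log ((1 + Real.sqrt (1 + u)) / 2))

/-- The function `g(u) = −(1/u)·log((1+√(1+u))/2)` giving the curvature of the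
hyperholomorphic line bundle on the cotangent bundle of a Hermitian symmetric space. -/
noncomputable def BGg (u : ℝ) : ℝ :=
  -(1 / u) * Real.log ((1 + Real.sqrt (1 + u)) / 2)

/-- For `u > 0`, if `D` is the derivative at `u` of `u ↦ u·f(u)`, then
`f(u) − 2·D = g(u)`. -/
theorem BGf_sub_two_mul_deriv (u : ℝ) (hu : 0 < u) (D : ℝ)
    (hD : HasDerivAt (fun v : ℝ => v * BGf v) D u) :
    BGf u - 2 * D = BGg u := by
  set s := Real.sqrt (1 + u) with hs
  have h1u : (0:ℝ) < 1 + u := by linarith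
  have hspos : 0 < s := Real.sqrt_pos.mpr h1u
  have hs1 : 1 < s := by
    have : Real.sqrt 1 < Real.sqrt (1 + u) := by
      apply Real.sqrt_lt_sqrt (by norm_num) (by linarith)
    simpa using this
  have hssq : s ^ 2 = 1 + u := Real.sq_sqrt h1u.le
  -- derivative of v ↦ √(1+v) at u
  have hsqrt : HasDerivAt (fun v : ℝ => Real.sqrt (1 + v)) (1 / (2 * s)) u := by
    have h1 : HasDerivAt (fun v : ℝ => 1 + v) 1 u := by
      simpa using (hasDerivAt_id u).const_add (1 : ℝ)
    have := (Real.hasDerivAt_sqrt (by positivity : (1:ℝ) + u ≠ 0)).comp u h1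
    simpa [hs, Function.comp_def] using this
  -- derivative of v ↦ log((1+√(1+v))/2) at u
  have hinner : HasDerivAt (fun v : ℝ => (1 + Real.sqrt (1 + v)) / 2)
      (1 / (2 * s) / 2) u := by
    simpa using ((hsqrt.const_add 1).div_const 2)
  have hlog : HasDerivAt (fun v : ℝ => Real.log ((1 + Real.sqrt (1 + v)) / 2))
      ((1 / (2 * s) / 2) / ((1 + s) / 2)) u := by
    apply hinner.log
    positivity
  have hh : HasDerivAt (fun v : ℝ =>
      Real.sqrt (1 + v) - 1 - Real.log ((1 + Real.sqrt (1 + v)) / 2))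
      (1 / (2 * s) - (1 / (2 * s) / 2) / ((1 + s) / 2)) u :=
    (hsqrt.sub_const 1).sub hlog
  -- u*f(u) = h(u) near u
  have heq : (fun v : ℝ => v * BGf v) =ᶠ[nhds u]
      (fun v : ℝ => Real.sqrt (1 + v) - 1 - Real.log ((1 + Real.sqrt (1 + v)) / 2)) := by
    filter_upwards [eventually_gt_nhds hu] with v hv
    unfold BGf
    field_simp
  have hD' := hh.congr_of_eventuallyEq heq
  have hDval : D = 1 / (2 * s) - (1 / (2 * s) / 2) / ((1 + s) / 2) := hD.unique hD'
  have key : D = 1 / (2 * (1 + s)) := by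
    rw [hDval]
    have h2 : (1 + s) ≠ 0 := by positivity
    field_simp
    ring
  unfold BGf BGg
  rw [key]
  have hs1' : (s - 1) / u = 1 / (1 + s) := by
    rw [div_eq_div_iff hu.ne' (by positivity)]
    nlinarith [hssq]
  have hune : u ≠ 0 := hu.ne'
  field_simp
  nlinarith [hssq, hspos]
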